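/- Let (Ω, 𝔄, P) be a probability space carrying a measurable stochastic process Z = (Z_t)_{t∈[0,1]} with continuous sample paths, 0 ≤ Z_t ≤ m pointwise for some constant m ≥ 1, and E[Z_t] = 1 for every t ∈ [0,1], and a random variable U uniformly distributed on (0,1) and independent of Z. Fix M < 0 and define V_t = max(−U/Z_t, M) for t ∈ [0,1] (with V_t = M when Z_t = 0). Then for every bounded f : [0,1] → (−∞,0] with at most finitely many discontinuities and sup_{t∈[0,1]}|f(t)| ≤ min(|M|, 1/m), P(V_t ≤ f(t) for all t ∈ [0,1]) = 1 − E[sup_{t∈[0,1]}(|f(t)| Z_t)]. -/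

import Mathlib

open MeasureTheory ProbabilityTheory Filter Topology

/-- the process `V = max(-U/Z, M)` generated by a generator `Z` and an
independent uniform rv `U` is a standard generalized Pareto process:
`P(V ≤ f) = 1 - E[sup_t(|f(t)| Z_t)]` for `‖f‖∞ ≤ min(|M|, 1/m)`. -/
theorem stmt11
    {Ω : Type*} [MeasurableSpace Ω] (P : Measure Ω) [IsProbabilityMeasure P]
    (Z : Ω → Set.Icc (0:ℝ) 1 → ℝ) (m : ℝ) (hm : 1 ≤ m)
    (hZmeas : ∀ t, Measurable fun ω => Z ω t)
    (hZcont : ∀ ω, Continuous (Z ω))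
    (hZbd : ∀ ω t, Z ω t ∈ Set.Icc (0:ℝ) m)
    (hZmean : ∀ t, ∫ ω, Z ω t ∂P = 1)
    (U : Ω → ℝ) (hUmeas : Measurable U)
    (hUunif : Measure.map U P = volume.restrict (Set.Ioo (0:ℝ) 1))
    (hindep : IndepFun U Z P)
    (M : ℝ) (hM : M < 0)
    (V : Ω → Set.Icc (0:ℝ) 1 → ℝ)
    (hV : ∀ ω t, V ω t = if Z ω t = 0 then M else max (-(U ω) / Z ω t) M)
    (f : Set.Icc (0:ℝ) 1 → ℝ)
    (hfbd : ∃ B, ∀ t, |f t| ≤ B)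
    (hfnonpos : ∀ t, f t ≤ 0)
    (hfdisc : {t | ¬ ContinuousAt f t}.Finite)
    (hfsup : (⨆ t, |f t|) ≤ min |M| (1 / m)) :
    P {ω | ∀ t, V ω t ≤ f t}
      = ENNReal.ofReal (1 - ∫ ω, (⨆ t, |f t| * Z ω t) ∂P) := by
  classical
  have hm0 : (0:ℝ) < m := lt_of_lt_of_le one_pos hm
  haveI : Nonempty (Set.Icc (0:ℝ) 1) := ⟨⟨0, le_refl 0, zero_le_one⟩⟩
  obtain ⟨B, hB⟩ := hfbd
  have hbdd : BddAbove (Set.range fun t => |f t|) := by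
    refine ⟨B, ?_⟩; rintro x ⟨t, rfl⟩; exact hB t
  have hfle : ∀ t, |f t| ≤ min |M| (1 / m) :=
    fun t => le_trans (le_ciSup hbdd t) hfsup
  -- each term |f t| * Z ω t lies in [0,1]
  have hterm : ∀ ω t, |f t| * Z ω t ∈ Set.Icc (0:ℝ) 1 := by
    intro ω t
    constructor
    · exact mul_nonneg (abs_nonneg _) (hZbd ω t).1
    · calc |f t| * Z ω t ≤ (1 / m) * m := by
            apply mul_le_mul (le_trans (hfle t) (min_le_right _ _)) (hZbd ω t).2
              (hZbd ω t).1 (by positivity)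
        _ = 1 := by field_simp
  have hbddAll : ∀ ω, BddAbove (Set.range fun t => |f t| * Z ω t) := by
    intro ω; refine ⟨1, ?_⟩; rintro x ⟨t, rfl⟩; exact (hterm ω t).2
  -- a countable dense set containing all discontinuity points of f
  obtain ⟨Q, hQc, hQd⟩ := TopologicalSpace.exists_countable_dense (Set.Icc (0:ℝ) 1)
  set T : Set (Set.Icc (0:ℝ) 1) := Q ∪ {t | ¬ ContinuousAt f t} with hT
  have hTc : T.Countable := hQc.union hfdisc.countable
  have hTd : Dense T := hQd.mono Set.subset_union_left
  haveI : Countable T := hTc.to_subtype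
  haveI : Nonempty T := (hTd.nonempty).to_subtype
  have hbddT : ∀ ω, BddAbove (Set.range fun t : T => |f (t : Set.Icc (0:ℝ) 1)| *
      Z ω (t : Set.Icc (0:ℝ) 1)) := by
    intro ω; refine ⟨1, ?_⟩; rintro x ⟨t, rfl⟩; exact (hterm ω _).2
  -- the sup over all t agrees with the sup over T
  have hsup_eq : ∀ ω, (⨆ t, |f t| * Z ω t)
      = ⨆ t : T, |f (t : Set.Icc (0:ℝ) 1)| * Z ω (t : Set.Icc (0:ℝ) 1) := by
    intro ω
    apply le_antisymm
    · apply ciSup_le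
      intro t
      by_cases ht : t ∈ T
      · exact le_ciSup (hbddT ω) ⟨t, ht⟩
      · have hfct : ContinuousAt f t := by
          by_contra h
          exact ht (Or.inr h)
        have hc : ContinuousAt (fun s => |f s| * Z ω s) t :=
          (hfct.abs).mul ((hZcont ω).continuousAt)
        obtain ⟨u, hu_mem, hu_lim⟩ := mem_closure_iff_seq_limit.mp (hTd t)
        have hlim : Tendsto (fun n => |f (u n)| * Z ω (u n)) atTop
            (𝓝 (|f t| * Z ω t)) := hc.tendsto.comp hu_lim
        exact le_of_tendsto hlim
          (Eventually.of_forall fun n => le_ciSup (hbddT ω) ⟨u n, hu_mem n⟩)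
    · exact ciSup_le fun t => le_ciSup (hbddAll ω) (t : Set.Icc (0:ℝ) 1)
  -- the (measurable) sup functional
  set φ : (Set.Icc (0:ℝ) 1 → ℝ) → ℝ :=
    fun z => ⨆ t : T, |f (t : Set.Icc (0:ℝ) 1)| * z (t : Set.Icc (0:ℝ) 1) with hφdef
  have hφ : Measurable φ :=
    Measurable.iSup fun t => (measurable_pi_apply _).const_mul _
  set S : Ω → ℝ := fun ω => φ (Z ω) with hSdef
  have hZm : Measurable Z := measurable_pi_lambda _ hZmeas
  have hS : Measurable S := hφ.comp hZm
  have hSval : ∀ ω, S ω = ⨆ t, |f t| * Z ω t := fun ω => (hsup_eq ω).symm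
  have hS01 : ∀ ω, S ω ∈ Set.Icc (0:ℝ) 1 := by
    intro ω
    rw [hSval]
    constructor
    · exact le_trans (hterm ω Classical.ofNonempty).1
        (le_ciSup (hbddAll ω) Classical.ofNonempty)
    · exact ciSup_le fun t => (hterm ω t).2
  -- U is a.s. in (0,1)
  have hae : ∀ᵐ ω ∂P, U ω ∈ Set.Ioo (0:ℝ) 1 := by
    rw [ae_iff]
    have : {ω | ¬ U ω ∈ Set.Ioo (0:ℝ) 1} = U ⁻¹' (Set.Ioo (0:ℝ) 1)ᶜ := rfl
    rw [this, ← Measure.map_apply hUmeas measurableSet_Ioo.compl, hUunif,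
      Measure.restrict_apply measurableSet_Ioo.compl, Set.compl_inter_self]
    exact measure_empty
  -- the event coincides a.e. with {S ≤ U}
  have hevent : {ω | ∀ t, V ω t ≤ f t} =ᵐ[P] {ω | S ω ≤ U ω} := by
    rw [Filter.eventuallyEq_set]
    filter_upwards [hae] with ω hω
    show (∀ t, V ω t ≤ f t) ↔ S ω ≤ U ω
    have key : ∀ t, (V ω t ≤ f t ↔ |f t| * Z ω t ≤ U ω) := by
      intro t
      have hMf : M ≤ f t := by
        have h1 := le_trans (hfle t) (min_le_left _ _)
        rw [abs_of_nonpos (hfnonpos t), abs_of_neg hM] at h1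
        linarith
      rw [hV]
      by_cases hz : Z ω t = 0
      · simp only [hz, if_pos rfl, mul_zero]
        exact ⟨fun _ => hω.1.le, fun _ => hMf⟩
      · have hzpos : 0 < Z ω t := lt_of_le_of_ne (hZbd ω t).1 (Ne.symm hz)
        have habs : |f t| = -f t := abs_of_nonpos (hfnonpos t)
        rw [if_neg hz, max_le_iff]
        constructor
        · rintro ⟨h1, -⟩
          rw [div_le_iff₀ hzpos] at h1
          rw [habs]
          nlinarith
        · intro h
          refine ⟨?_, hMf⟩
          rw [div_le_iff₀ hzpos]
          rw [habs] at h
          nlinarith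
    constructor
    · intro h
      rw [hSval]
      exact ciSup_le fun t => (key t).1 (h t)
    · intro h t
      refine (key t).2 (le_trans ?_ h)
      rw [hSval]
      exact le_ciSup (hbddAll ω) t
  -- independence of S and U
  have hindSU : IndepFun S U P := (hindep.comp measurable_id hφ).symm
  -- joint law is the product of the marginals
  have hmap : Measure.map (fun ω => (S ω, U ω)) P = (P.map S).prod (P.map U) :=
    (indepFun_iff_map_prod_eq_prod_map_map hS.aemeasurable hUmeas.aemeasurable).mp hindSU
  have hsetm : MeasurableSet {p : ℝ × ℝ | p.1 ≤ p.2} :=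
    measurableSet_le measurable_fst measurable_snd
  -- the measure of Ici s under the uniform law
  have hIci : ∀ s : ℝ, (volume.restrict (Set.Ioo (0:ℝ) 1)) (Set.Ici s)
      = ENNReal.ofReal (1 - max s 0) := by
    intro s
    rw [Measure.restrict_apply measurableSet_Ici]
    rcases le_or_gt s 0 with hs | hs
    · have : Set.Ici s ∩ Set.Ioo (0:ℝ) 1 = Set.Ioo (0:ℝ) 1 :=
        Set.inter_eq_right.mpr fun x hx => le_trans hs hx.1.le
      rw [this, Real.volume_Ioo, max_eq_right hs]
    · have : Set.Ici s ∩ Set.Ioo (0:ℝ) 1 = Set.Ico s 1 := by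
        ext x
        simp only [Set.mem_inter_iff, Set.mem_Ici, Set.mem_Ioo, Set.mem_Ico]
        constructor
        · rintro ⟨h1, _, h3⟩; exact ⟨h1, h3⟩
        · rintro ⟨h1, h2⟩; exact ⟨h1, lt_of_lt_of_le hs h1, h2⟩
      rw [this, Real.volume_Ico, max_eq_left hs.le]
  -- S is integrable
  have hSint : Integrable S P :=
    ⟨hS.aestronglyMeasurable, HasFiniteIntegral.of_bounded (C := 1)
      (ae_of_all _ fun ω => by
        rw [Real.norm_eq_abs, abs_of_nonneg (hS01 ω).1]; exact (hS01 ω).2)⟩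
  -- compute the probability
  calc P {ω | ∀ t, V ω t ≤ f t} = P {ω | S ω ≤ U ω} := measure_congr hevent
    _ = ((P.map S).prod (P.map U)) {p : ℝ × ℝ | p.1 ≤ p.2} := by
        rw [← hmap, Measure.map_apply (hS.prodMk hUmeas) hsetm]
        rfl
    _ = ∫⁻ s, (P.map U) (Set.Ici s) ∂(P.map S) := by
        rw [Measure.prod_apply hsetm]
        rfl
    _ = ∫⁻ s, ENNReal.ofReal (1 - max s 0) ∂(P.map S) := by
        refine lintegral_congr fun s => ?_
        rw [hUunif, hIci]
    _ = ∫⁻ ω, ENNReal.ofReal (1 - max (S ω) 0) ∂P := by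
        have hmeas : Measurable fun s : ℝ => ENNReal.ofReal (1 - max s 0) := by
          apply Measurable.ennreal_ofReal
          exact measurable_const.sub (measurable_id'.max measurable_const)
        rw [lintegral_map hmeas hS]
    _ = ∫⁻ ω, ENNReal.ofReal ((fun ω => 1 - S ω) ω) ∂P := by
        refine lintegral_congr fun ω => ?_
        rw [max_eq_left (hS01 ω).1]
    _ = ENNReal.ofReal (∫ ω, (1 - S ω) ∂P) := by
        have hint : Integrable (fun ω => 1 - S ω) P := by
          exact (integrable_const (1:ℝ)).sub hSint
        rw [← ofReal_integral_eq_lintegral_ofReal hint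
          (ae_of_all _ fun ω => by simpa using (hS01 ω).2)]
    _ = ENNReal.ofReal (1 - ∫ ω, (⨆ t, |f t| * Z ω t) ∂P) := by
        have h2 : ∫ ω, (1 - S ω) ∂P = (∫ _, (1:ℝ) ∂P) - ∫ ω, S ω ∂P :=
          integral_sub (integrable_const 1) hSint
        rw [h2]
        simp only [integral_const, measure_univ, probReal_univ, ENNReal.toReal_one, smul_eq_mul, one_mul]
        congr 1
        rw [integral_congr_ae (ae_of_all _ hSval)]
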